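/- arXiv:2510.04807 — 2 statements merged into one kernel-verified Lean document; each statement's English description precedes it below -/
import Mathlib

section
/- Let n ≥ 1, M ∈ ℝ^{n×n}, let P and Σ be symmetric positive semidefinite n×n matrices, and let λ ≥ 0 with Σ ⪰ λI. Then √(λ_max(MΣMᵀ + P)) − √(λ_max(λ·MMᵀ + P)) ≤ ‖M‖ · (√(λ_max(Σ)) − √λ), where ‖M‖ is the ℓ²-operator (spectral) norm of M. -/
open Matrix

noncomputable def enorm {n : ℕ} (v : Fin n → ℝ) : ℝ := Real.sqrt (∑ i, v i ^ 2)

noncomputable def lamMax {n : ℕ} (M : Matrix (Fin n) (Fin n) ℝ) : ℝ :=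
  sSup {r : ℝ | ∃ v : Fin n → ℝ, _root_.enorm v = 1 ∧ r = v ⬝ᵥ M.mulVec v}

noncomputable def lamMin {n : ℕ} (M : Matrix (Fin n) (Fin n) ℝ) : ℝ :=
  sInf {r : ℝ | ∃ v : Fin n → ℝ, _root_.enorm v = 1 ∧ r = v ⬝ᵥ M.mulVec v}

noncomputable def specNorm {n p : ℕ} (M : Matrix (Fin n) (Fin p) ℝ) : ℝ :=
  Real.sqrt (lamMax (Mᵀ * M))

structure Policy (n m T : ℕ) (A : Matrix (Fin n) (Fin n) ℝ) (B : Matrix (Fin n) (Fin m) ℝ) where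
  xbar : ℕ → Fin n → ℝ
  ubar : ℕ → Fin m → ℝ
  K : ℕ → Matrix (Fin m) (Fin n) ℝ
  xbar_dyn : ∀ k, k < T → xbar (k + 1) = A.mulVec (xbar k) + B.mulVec (ubar k)

namespace Policy

variable {n m T : ℕ} {A : Matrix (Fin n) (Fin n) ℝ} {B : Matrix (Fin n) (Fin m) ℝ}

noncomputable def mean (C : Policy n m T A B) (mu0 : Fin n → ℝ) : ℕ → Fin n → ℝ
  | 0 => mu0
  | k + 1 => A.mulVec (C.mean mu0 k) + B.mulVec (C.ubar k)
      + B.mulVec ((C.K k).mulVec (C.mean mu0 k - C.xbar k))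

noncomputable def cov (C : Policy n m T A B) (D : Matrix (Fin n) (Fin n) ℝ)
    (Sig0 : Matrix (Fin n) (Fin n) ℝ) : ℕ → Matrix (Fin n) (Fin n) ℝ
  | 0 => Sig0
  | k + 1 => (A + B * C.K k) * C.cov D Sig0 k * (A + B * C.K k)ᵀ + D * Dᵀ

noncomputable def clProd (C : Policy n m T A B) : ℕ → Matrix (Fin n) (Fin n) ℝ
  | 0 => 1
  | k + 1 => (A + B * C.K k) * C.clProd k

end Policy

def stateOK {n m T : ℕ} {A : Matrix (Fin n) (Fin n) ℝ} {B : Matrix (Fin n) (Fin m) ℝ}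
    (c : ℝ) {I : ℕ} (ax : Fin I → Fin n → ℝ) (bx : Fin I → ℝ)
    (D : Matrix (Fin n) (Fin n) ℝ) (C : Policy n m T A B)
    (mu0 : Fin n → ℝ) (Sig0 : Matrix (Fin n) (Fin n) ℝ) : Prop :=
  ∀ i : Fin I, ∀ k ≤ T,
    ax i ⬝ᵥ C.mean mu0 k + c * Real.sqrt (ax i ⬝ᵥ (C.cov D Sig0 k).mulVec (ax i)) ≤ bx i

def ctrlOK {n m T : ℕ} {A : Matrix (Fin n) (Fin n) ℝ} {B : Matrix (Fin n) (Fin m) ℝ}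
    (c : ℝ) {J : ℕ} (au : Fin J → Fin m → ℝ) (bu : Fin J → ℝ)
    (D : Matrix (Fin n) (Fin n) ℝ) (C : Policy n m T A B)
    (mu0 : Fin n → ℝ) (Sig0 : Matrix (Fin n) (Fin n) ℝ) : Prop :=
  ∀ j : Fin J, ∀ k < T,
    au j ⬝ᵥ (C.ubar k + (C.K k).mulVec (C.mean mu0 k - C.xbar k))
      + c * Real.sqrt (au j ⬝ᵥ (C.K k * C.cov D Sig0 k * (C.K k)ᵀ).mulVec (au j)) ≤ bu j

def inBall {n : ℕ} (c : ℝ) (muHat : Fin n → ℝ) (rHat : ℝ)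
    (mu : Fin n → ℝ) (Sig : Matrix (Fin n) (Fin n) ℝ) : Prop :=
  _root_.enorm (mu - muHat) + c * Real.sqrt (lamMax Sig) ≤ rHat

def BRS {n m : ℕ} (T : ℕ) (A : Matrix (Fin n) (Fin n) ℝ) (B : Matrix (Fin n) (Fin m) ℝ)
    (D : Matrix (Fin n) (Fin n) ℝ) (c : ℝ) {I J : ℕ}
    (ax : Fin I → Fin n → ℝ) (bx : Fin I → ℝ) (au : Fin J → Fin m → ℝ) (bu : Fin J → ℝ)
    (S : Set ((Fin n → ℝ) × Matrix (Fin n) (Fin n) ℝ)) :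
    Set ((Fin n → ℝ) × Matrix (Fin n) (Fin n) ℝ) :=
  {p | p.2.PosSemidef ∧ ∃ C : Policy n m T A B, C.xbar 0 = p.1 ∧
    stateOK c ax bx D C p.1 p.2 ∧ ctrlOK c au bu D C p.1 p.2 ∧
    (C.mean p.1 T, C.cov D p.2 T) ∈ S}

def Proj {n : ℕ} (S : Set ((Fin n → ℝ) × Matrix (Fin n) (Fin n) ℝ)) : Set (Fin n → ℝ) :=
  {mu | ∃ Sig, (mu, Sig) ∈ S}

lemma enorm_sq_one {n : ℕ} {v : Fin n → ℝ} (h : _root_.enorm v = 1) : ∑ i, v i ^ 2 = 1 := by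
  have h0 : 0 ≤ ∑ i, v i ^ 2 := Finset.sum_nonneg fun i _ => sq_nonneg _
  have := congrArg (· ^ 2) h
  simpa [_root_.enorm, Real.sq_sqrt h0] using this

lemma exists_unit {n : ℕ} (hn : 1 ≤ n) : ∃ v : Fin n → ℝ, _root_.enorm v = 1 := by
  refine ⟨Pi.single ⟨0, hn⟩ 1, ?_⟩
  simp [_root_.enorm, Pi.single_apply]

lemma rayleigh_bdd {n : ℕ} (A : Matrix (Fin n) (Fin n) ℝ) :
    BddAbove {r : ℝ | ∃ v : Fin n → ℝ, _root_.enorm v = 1 ∧ r = v ⬝ᵥ A.mulVec v} := by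
  refine ⟨∑ i, ∑ j, |A i j|, ?_⟩
  rintro r ⟨v, hv, rfl⟩
  have hsum := enorm_sq_one hv
  have hvi : ∀ i, |v i| ≤ 1 := by
    intro i
    have h1 : v i ^ 2 ≤ 1 := by
      calc v i ^ 2 ≤ ∑ j, v j ^ 2 :=
            Finset.single_le_sum (f := fun j => v j ^ 2) (fun j _ => sq_nonneg _)
              (Finset.mem_univ i)
        _ = 1 := hsum
    nlinarith [abs_nonneg (v i), sq_abs (v i)]
  calc v ⬝ᵥ A.mulVec v = ∑ i, ∑ j, v i * (A i j * v j) := by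
        simp [dotProduct, Matrix.mulVec, Finset.mul_sum]
    _ ≤ ∑ i, ∑ j, |A i j| := by
        refine Finset.sum_le_sum fun i _ => Finset.sum_le_sum fun j _ => ?_
        calc v i * (A i j * v j) ≤ |v i * (A i j * v j)| := le_abs_self _
          _ = |v i| * |A i j| * |v j| := by rw [abs_mul, abs_mul]; ring
          _ ≤ 1 * |A i j| * 1 :=
              mul_le_mul (mul_le_mul_of_nonneg_right (hvi i) (abs_nonneg _)) (hvi j)
                (abs_nonneg _) (by positivity)
          _ = |A i j| := by ring

lemma rayleigh_le_lamMax {n : ℕ} (A : Matrix (Fin n) (Fin n) ℝ) {v : Fin n → ℝ}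
    (hv : _root_.enorm v = 1) : v ⬝ᵥ A.mulVec v ≤ lamMax A :=
  le_csSup (rayleigh_bdd A) ⟨v, hv, rfl⟩

lemma rayleigh_scaled {n : ℕ} (A : Matrix (Fin n) (Fin n) ℝ) (w : Fin n → ℝ) :
    w ⬝ᵥ A.mulVec w ≤ lamMax A * (w ⬝ᵥ w) := by
  have hdw : w ⬝ᵥ w = ∑ i, w i ^ 2 := by simp [dotProduct, sq]
  by_cases hw : ∑ i, w i ^ 2 = 0
  · have hw0 : w = 0 := by
      funext i
      have := (Finset.sum_eq_zero_iff_of_nonneg (fun j _ => sq_nonneg (w j))).1 hw i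
        (Finset.mem_univ i)
      exact pow_eq_zero_iff (n := 2) (by norm_num) |>.1 this
    simp [hw0]
  · have hpos : 0 < ∑ i, w i ^ 2 :=
      lt_of_le_of_ne (Finset.sum_nonneg fun i _ => sq_nonneg _) (Ne.symm hw)
    set s := Real.sqrt (∑ i, w i ^ 2) with hs
    have hspos : 0 < s := Real.sqrt_pos.2 hpos
    have hs2 : s ^ 2 = ∑ i, w i ^ 2 := Real.sq_sqrt hpos.le
    have hu : _root_.enorm (s⁻¹ • w) = 1 := by
      have : ∑ i, (s⁻¹ • w) i ^ 2 = s⁻¹ ^ 2 * ∑ i, w i ^ 2 := by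
        simp [Finset.mul_sum, mul_pow]
      have h1 : s⁻¹ ^ 2 * s ^ 2 = 1 := by field_simp
      rw [_root_.enorm, this, ← hs2, h1, Real.sqrt_one]
    have hle := rayleigh_le_lamMax A hu
    have heq : (s⁻¹ • w) ⬝ᵥ A.mulVec (s⁻¹ • w) = s⁻¹ ^ 2 * (w ⬝ᵥ A.mulVec w) := by
      rw [Matrix.mulVec_smul, smul_dotProduct, dotProduct_smul]
      simp [smul_eq_mul]; ring
    rw [heq] at hle
    rw [hdw, ← hs2]
    have h1 : s⁻¹ ^ 2 * s ^ 2 = 1 := by field_simp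
    calc w ⬝ᵥ A.mulVec w = s ^ 2 * (s⁻¹ ^ 2 * (w ⬝ᵥ A.mulVec w)) := by
          rw [← mul_assoc, mul_comm (s ^ 2) _, h1, one_mul]
      _ ≤ s ^ 2 * lamMax A := mul_le_mul_of_nonneg_left hle (sq_nonneg s)
      _ = lamMax A * s ^ 2 := mul_comm _ _

lemma lamMax_nonneg_of_rayleigh {n : ℕ} (hn : 1 ≤ n) {A : Matrix (Fin n) (Fin n) ℝ}
    (hA : ∀ v : Fin n → ℝ, 0 ≤ v ⬝ᵥ A.mulVec v) : 0 ≤ lamMax A := by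
  obtain ⟨v, hv⟩ := exists_unit hn
  exact le_trans (hA v) (rayleigh_le_lamMax A hv)

lemma mulVec_transpose_sq_le {n : ℕ} (hn : 1 ≤ n) (M : Matrix (Fin n) (Fin n) ℝ)
    {v : Fin n → ℝ} (hv : _root_.enorm v = 1) :
    (Mᵀ.mulVec v) ⬝ᵥ (Mᵀ.mulVec v) ≤ lamMax (Mᵀ * M) := by
  set w := Mᵀ.mulVec v with hw
  have hMtM : ∀ u : Fin n → ℝ, u ⬝ᵥ (Mᵀ * M).mulVec u = (M.mulVec u) ⬝ᵥ (M.mulVec u) := by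
    intro u
    rw [← Matrix.mulVec_mulVec, Matrix.dotProduct_mulVec, Matrix.vecMul_transpose]
  have hnn : 0 ≤ lamMax (Mᵀ * M) :=
    lamMax_nonneg_of_rayleigh hn fun u => by
      rw [hMtM u]
      simpa [dotProduct, sq] using
        Finset.sum_nonneg (fun i (_ : i ∈ Finset.univ) => sq_nonneg (M.mulVec u i))
  -- w ⬝ᵥ w = v ⬝ᵥ M.mulVec w
  have hkey : w ⬝ᵥ w = v ⬝ᵥ M.mulVec w := by
    rw [Matrix.dotProduct_mulVec, Matrix.vecMul_transpose]
    exact dotProduct_comm _ _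
  have hvv : (∑ i, v i ^ 2) = 1 := enorm_sq_one hv
  have hcs : (v ⬝ᵥ M.mulVec w) ^ 2 ≤ (M.mulVec w) ⬝ᵥ (M.mulVec w) := by
    have h := Finset.sum_mul_sq_le_sq_mul_sq Finset.univ v (M.mulVec w)
    have h2 : (M.mulVec w) ⬝ᵥ (M.mulVec w) = ∑ i, (M.mulVec w) i ^ 2 := by
      simp [dotProduct, sq]
    calc (v ⬝ᵥ M.mulVec w) ^ 2 = (∑ i, v i * M.mulVec w i) ^ 2 := by rfl
      _ ≤ (∑ i, v i ^ 2) * ∑ i, (M.mulVec w) i ^ 2 := h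
      _ = (M.mulVec w) ⬝ᵥ (M.mulVec w) := by rw [hvv, one_mul, h2]
  -- combine
  have hgrow := rayleigh_scaled (Mᵀ * M) w
  rw [hMtM w] at hgrow
  have hsq : (w ⬝ᵥ w) ^ 2 ≤ (M.mulVec w) ⬝ᵥ (M.mulVec w) := by rw [hkey]; exact hcs
  by_cases h0 : w ⬝ᵥ w = 0
  · rw [h0]; exact hnn
  · have hpos : 0 < w ⬝ᵥ w := by
      have : 0 ≤ w ⬝ᵥ w := by
        simpa [dotProduct, sq] using
          Finset.sum_nonneg (fun i (_ : i ∈ Finset.univ) => sq_nonneg (w i))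
      exact lt_of_le_of_ne this (Ne.symm h0)
    nlinarith [hsq, hgrow]

set_option maxHeartbeats 1000000 in
/-- maximal-eigenvalue square-root perturbation bound. -/
theorem sqrt_lamMax_diff_le (n : ℕ) (hn : 1 ≤ n)
    (M : Matrix (Fin n) (Fin n) ℝ)
    (P Sig : Matrix (Fin n) (Fin n) ℝ) (hP : P.PosSemidef) (hSig : Sig.PosSemidef)
    (lam : ℝ) (hlam : 0 ≤ lam)
    (hdom : (Sig - lam • (1 : Matrix (Fin n) (Fin n) ℝ)).PosSemidef) :
    Real.sqrt (lamMax (M * Sig * Mᵀ + P))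
      - Real.sqrt (lamMax (lam • (M * Mᵀ) + P))
      ≤ specNorm M * (Real.sqrt (lamMax Sig) - Real.sqrt lam) := by
  -- abbreviations
  set B := lam • (M * Mᵀ) + P with hB
  set N := specNorm M with hN
  have hNnn : 0 ≤ N := Real.sqrt_nonneg _
  -- lam ≤ lamMax Sig
  have hlamle : lam ≤ lamMax Sig := by
    obtain ⟨u, hu⟩ := exists_unit hn
    have huu : u ⬝ᵥ u = 1 := by
      have := enorm_sq_one hu; simpa [dotProduct, sq] using this
    have hd := hdom.dotProduct_mulVec_nonneg u
    simp only [star_trivial] at hd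
    have : u ⬝ᵥ (Sig - lam • (1 : Matrix (Fin n) (Fin n) ℝ)).mulVec u
        = u ⬝ᵥ Sig.mulVec u - lam := by
      rw [Matrix.sub_mulVec, dotProduct_sub, Matrix.smul_mulVec,
        Matrix.one_mulVec, dotProduct_smul, smul_eq_mul, huu, mul_one]
    rw [this] at hd
    have := rayleigh_le_lamMax Sig hu
    linarith
  have hG : 0 ≤ Real.sqrt (lamMax Sig) - Real.sqrt lam :=
    sub_nonneg.2 (Real.sqrt_le_sqrt hlamle)
  -- R : target bound
  set R := Real.sqrt (lamMax B) + N * (Real.sqrt (lamMax Sig) - Real.sqrt lam) with hR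
  have hBnn : 0 ≤ lamMax B := by
    apply lamMax_nonneg_of_rayleigh hn
    intro u
    have h1 := hP.dotProduct_mulVec_nonneg u
    simp only [star_trivial] at h1
    have h2 : (0:ℝ) ≤ u ⬝ᵥ (lam • (M * Mᵀ)).mulVec u := by
      have : u ⬝ᵥ (lam • (M * Mᵀ)).mulVec u = lam * ((Mᵀ.mulVec u) ⬝ᵥ (Mᵀ.mulVec u)) := by
        rw [Matrix.smul_mulVec, dotProduct_smul, smul_eq_mul,
          ← Matrix.mulVec_mulVec, Matrix.dotProduct_mulVec, ← Matrix.mulVec_transpose]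
      rw [this]
      exact mul_nonneg hlam (by
        simpa [dotProduct, sq] using
          Finset.sum_nonneg (fun i (_ : i ∈ Finset.univ) => sq_nonneg (Mᵀ.mulVec u i)))
    rw [hB, Matrix.add_mulVec, dotProduct_add]
    linarith
  have hRnn : 0 ≤ R := by
    have := Real.sqrt_nonneg (lamMax B)
    have := mul_nonneg hNnn hG
    linarith
  -- main bound via csSup
  have hmain : lamMax (M * Sig * Mᵀ + P) ≤ R ^ 2 := by
    apply csSup_le
    · obtain ⟨u, hu⟩ := exists_unit hn
      exact ⟨u ⬝ᵥ (M * Sig * Mᵀ + P).mulVec u, u, hu, rfl⟩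
    rintro r ⟨v, hv, rfl⟩
    set w := Mᵀ.mulVec v with hw
    set s2 := w ⬝ᵥ w with hs2def
    set a := w ⬝ᵥ Sig.mulVec w with ha
    set p := v ⬝ᵥ P.mulVec v with hp
    have hs2nn : 0 ≤ s2 := by
      simpa [hs2def, dotProduct, sq] using
        Finset.sum_nonneg (fun i (_ : i ∈ Finset.univ) => sq_nonneg (w i))
    have hpnn : 0 ≤ p := by have := hP.dotProduct_mulVec_nonneg v; simpa [star_trivial] using this
    -- value identities
    have hval1 : v ⬝ᵥ (M * Sig * Mᵀ + P).mulVec v = a + p := by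
      rw [Matrix.add_mulVec, dotProduct_add]
      congr 1
      rw [← Matrix.mulVec_mulVec, ← Matrix.mulVec_mulVec, Matrix.dotProduct_mulVec,
        ← Matrix.mulVec_transpose]
    have hval2 : v ⬝ᵥ B.mulVec v = lam * s2 + p := by
      rw [hB, Matrix.add_mulVec, dotProduct_add]
      congr 1
      rw [Matrix.smul_mulVec, dotProduct_smul, smul_eq_mul,
        ← Matrix.mulVec_mulVec, Matrix.dotProduct_mulVec, ← Matrix.mulVec_transpose]
    -- a ≥ lam * s2
    have hba : lam * s2 ≤ a := by
      have hd := hdom.dotProduct_mulVec_nonneg w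
      simp only [star_trivial] at hd
      have : w ⬝ᵥ (Sig - lam • (1 : Matrix (Fin n) (Fin n) ℝ)).mulVec w = a - lam * s2 := by
        rw [Matrix.sub_mulVec, dotProduct_sub, Matrix.smul_mulVec,
          Matrix.one_mulVec, dotProduct_smul, smul_eq_mul]
      rw [this] at hd; linarith
    have hann : 0 ≤ a := le_trans (mul_nonneg hlam hs2nn) hba
    -- a ≤ lamMax Sig * s2
    have haS : a ≤ lamMax Sig * s2 := rayleigh_scaled Sig w
    -- s2 ≤ N^2
    have hsN : s2 ≤ N ^ 2 := by
      have h1 := mulVec_transpose_sq_le hn M hv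
      have h2 : N ^ 2 = lamMax (Mᵀ * M) := Real.sq_sqrt (by
        apply lamMax_nonneg_of_rayleigh hn
        intro u
        rw [← Matrix.mulVec_mulVec, Matrix.dotProduct_mulVec, Matrix.vecMul_transpose]
        simpa [dotProduct, sq] using
          Finset.sum_nonneg (fun i (_ : i ∈ Finset.univ) => sq_nonneg (M.mulVec u i)))
      rw [h2]; exact h1
    -- sqrt chain
    have hs : Real.sqrt s2 ≤ N := by
      calc Real.sqrt s2 ≤ Real.sqrt (N ^ 2) := Real.sqrt_le_sqrt hsN
        _ = N := Real.sqrt_sq hNnn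
    have hsqa : Real.sqrt a ≤ Real.sqrt (lamMax Sig) * Real.sqrt s2 := by
      calc Real.sqrt a ≤ Real.sqrt (lamMax Sig * s2) := Real.sqrt_le_sqrt haS
        _ = Real.sqrt (lamMax Sig) * Real.sqrt s2 := Real.sqrt_mul (le_trans hlam hlamle) _
    have hsqb : Real.sqrt (lam * s2) = Real.sqrt lam * Real.sqrt s2 := Real.sqrt_mul hlam _
    -- sqrt perturbation: sqrt(a+p) ≤ sqrt(lam*s2+p) + (sqrt a - sqrt (lam*s2))
    have hpert : Real.sqrt (a + p)
        ≤ Real.sqrt (lam * s2 + p) + (Real.sqrt a - Real.sqrt (lam * s2)) := by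
      set x := Real.sqrt (a + p)
      set y := Real.sqrt (lam * s2 + p)
      set u := Real.sqrt a
      set t := Real.sqrt (lam * s2)
      have hx2 : x ^ 2 = a + p := Real.sq_sqrt (by linarith)
      have hy2 : y ^ 2 = lam * s2 + p := Real.sq_sqrt (by positivity)
      have hu2 : u ^ 2 = a := Real.sq_sqrt hann
      have ht2 : t ^ 2 = lam * s2 := Real.sq_sqrt (by positivity)
      have hty : t ≤ y := Real.sqrt_le_sqrt (by linarith)
      have htu : t ≤ u := Real.sqrt_le_sqrt hba
      have hxnn : 0 ≤ x := Real.sqrt_nonneg _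
      have hynn : 0 ≤ y := Real.sqrt_nonneg _
      nlinarith [sq_nonneg (x - (y + u - t)), sq_nonneg (x + (y + u - t)),
        mul_nonneg (sub_nonneg.2 htu) (sub_nonneg.2 hty)]
    -- sqrt(lam*s2+p) ≤ sqrt(lamMax B)
    have hvB : Real.sqrt (lam * s2 + p) ≤ Real.sqrt (lamMax B) := by
      apply Real.sqrt_le_sqrt
      rw [← hval2]
      exact rayleigh_le_lamMax B hv
    -- combine: sqrt(a+p) ≤ R
    have hfin : Real.sqrt (a + p) ≤ R := by
      have h1 : Real.sqrt a - Real.sqrt (lam * s2)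
          ≤ N * (Real.sqrt (lamMax Sig) - Real.sqrt lam) := by
        have : Real.sqrt a - Real.sqrt (lam * s2)
            ≤ Real.sqrt s2 * (Real.sqrt (lamMax Sig) - Real.sqrt lam) := by
          rw [hsqb]; nlinarith [hsqa]
        calc Real.sqrt a - Real.sqrt (lam * s2)
            ≤ Real.sqrt s2 * (Real.sqrt (lamMax Sig) - Real.sqrt lam) := this
          _ ≤ N * (Real.sqrt (lamMax Sig) - Real.sqrt lam) :=
              mul_le_mul_of_nonneg_right hs hG
      rw [hR]; linarith [hpert, hvB]
    rw [hval1]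
    calc a + p = Real.sqrt (a + p) ^ 2 := (Real.sq_sqrt (by linarith)).symm
      _ ≤ R ^ 2 := by nlinarith [Real.sqrt_nonneg (a + p)]
  -- finish
  have hfinal : Real.sqrt (lamMax (M * Sig * Mᵀ + P)) ≤ R := by
    calc Real.sqrt (lamMax (M * Sig * Mᵀ + P)) ≤ Real.sqrt (R ^ 2) :=
          Real.sqrt_le_sqrt hmain
      _ = R := Real.sqrt_sq hRnn
  rw [hR] at hfinal
  linarith
end

section
/- For every n ≥ 1, a ∈ ℝⁿ, M ∈ ℝ^{n×n}, and diagonal n×n matrix Λ with nonnegative diagonal entries, the supremum over V ∈ SO(n) of aᵀ (M V Λ Vᵀ Mᵀ) a equals ‖Mᵀa‖₂² · max_i Λ_{ii}, and this supremum is attained by some V ∈ SO(n). -/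
open Matrix

/-- Membership in the special orthogonal group SO(n). -/
def isSO {n : ℕ} (V : Matrix (Fin n) (Fin n) ℝ) : Prop := Vᵀ * V = 1 ∧ V.det = 1


section Aux

open Matrix

private lemma quad_diag_sum {n : ℕ} (Lam : Matrix (Fin n) (Fin n) ℝ) (hdiag : Lam.IsDiag)
    (x : Fin n → ℝ) : x ⬝ᵥ Lam.mulVec x = ∑ i, Lam i i * x i ^ 2 := by
  simp only [dotProduct, Matrix.mulVec]
  refine Finset.sum_congr rfl fun i _ => ?_
  have h : ∑ j, Lam i j * x j = Lam i i * x i := by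
    refine Finset.sum_eq_single i (fun j _ hj => ?_) (by simp)
    rw [hdiag (Ne.symm hj), zero_mul]
  rw [h]; ring

private lemma quad_value {n : ℕ} (a : Fin n → ℝ) (M Lam V : Matrix (Fin n) (Fin n) ℝ)
    (hdiag : Lam.IsDiag) :
    a ⬝ᵥ (M * V * Lam * Vᵀ * Mᵀ).mulVec a
      = ∑ i, Lam i i * ((Vᵀ.mulVec (Mᵀ.mulVec a)) i) ^ 2 := by
  rw [← quad_diag_sum Lam hdiag]
  simp only [← Matrix.mulVec_mulVec, Matrix.dotProduct_mulVec, ← Matrix.mulVec_transpose]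

private lemma norm_preserved {n : ℕ} (V : Matrix (Fin n) (Fin n) ℝ) (hV : Vᵀ * V = 1)
    (b : Fin n → ℝ) : ∑ i, ((Vᵀ.mulVec b) i) ^ 2 = ∑ i, b i ^ 2 := by
  have h1 : ∑ i, ((Vᵀ.mulVec b) i) ^ 2 = (Vᵀ.mulVec b) ⬝ᵥ (Vᵀ.mulVec b) := by
    simp [dotProduct, sq]
  have h2 : ∑ i, b i ^ 2 = b ⬝ᵥ b := by simp [dotProduct, sq]
  rw [h1, h2, Matrix.dotProduct_mulVec, Matrix.vecMul_transpose, Matrix.mulVec_mulVec,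
    mul_eq_one_comm.mp hV, Matrix.one_mulVec]

end Aux

/-- the supremum over `V ∈ SO(n)` of `aᵀ M V Λ Vᵀ Mᵀ a` equals
`‖Mᵀa‖₂² · max_i Λ_{ii}` and is attained. -/
theorem sup_rotation_quadform (n : ℕ) (hn : 1 ≤ n) (a : Fin n → ℝ)
    (M : Matrix (Fin n) (Fin n) ℝ)
    (Lam : Matrix (Fin n) (Fin n) ℝ) (hdiag : Lam.IsDiag) (hnn : ∀ i, 0 ≤ Lam i i) :
    IsGreatest
      {r : ℝ | ∃ V : Matrix (Fin n) (Fin n) ℝ, isSO V ∧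
        r = a ⬝ᵥ (M * V * Lam * Vᵀ * Mᵀ).mulVec a}
      (_root_.enorm (Mᵀ.mulVec a) ^ 2 *
        Finset.univ.sup' ⟨⟨0, hn⟩, Finset.mem_univ _⟩ (fun i : Fin n => Lam i i)) := by
  classical
  set lam : ℝ := Finset.univ.sup' ⟨⟨0, hn⟩, Finset.mem_univ _⟩ (fun i : Fin n => Lam i i)
    with hlam
  set b : Fin n → ℝ := Mᵀ.mulVec a with hb
  have henorm : _root_.enorm b ^ 2 = ∑ i, b i ^ 2 := by
    rw [_root_.enorm, Real.sq_sqrt (Finset.sum_nonneg fun i _ => sq_nonneg _)]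
  constructor
  · -- membership: construct the optimal rotation
    obtain ⟨i₀, -, hi₀⟩ := Finset.exists_mem_eq_sup' (⟨⟨0, hn⟩, Finset.mem_univ _⟩ :
      (Finset.univ : Finset (Fin n)).Nonempty) (fun i : Fin n => Lam i i)
    by_cases hbz : b = 0
    · refine ⟨1, ⟨by simp, by simp⟩, ?_⟩
      rw [quad_value a M Lam 1 hdiag, ← hb, hbz]
      simp [_root_.enorm, Matrix.mulVec_zero]
    · set r : ℝ := Real.sqrt (∑ i, b i ^ 2) with hr
      have hsum_pos : 0 < ∑ i, b i ^ 2 := by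
        obtain ⟨j, hj⟩ : ∃ j, b j ≠ 0 := by
          by_contra h; push_neg at h; exact hbz (funext h)
        exact Finset.sum_pos' (fun i _ => sq_nonneg _)
          ⟨j, Finset.mem_univ j, by positivity⟩
      have hrpos : 0 < r := Real.sqrt_pos.mpr hsum_pos
      have hr2 : r ^ 2 = ∑ i, b i ^ 2 := Real.sq_sqrt hsum_pos.le
      set u : EuclideanSpace ℝ (Fin n) := r⁻¹ • ((WithLp.equiv 2 _).symm b) with hu
      have huj : ∀ j, u j = r⁻¹ * b j := fun j => rfl
      have hnu : ‖u‖ = 1 := by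
        rw [EuclideanSpace.norm_eq]
        have : ∑ i, ‖u i‖ ^ 2 = r⁻¹ ^ 2 * ∑ i, b i ^ 2 := by
          rw [Finset.mul_sum]
          refine Finset.sum_congr rfl fun i _ => ?_
          rw [huj i, Real.norm_eq_abs, sq_abs]; ring
        rw [this, ← hr2]
        rw [show r⁻¹ ^ 2 * r ^ 2 = 1 by field_simp]
        exact Real.sqrt_one
      have hON : Orthonormal ℝ (({i₀} : Set (Fin n)).restrict (fun _ : Fin n => u)) := by
        rw [orthonormal_iff_ite]
        rintro ⟨i, hi⟩ ⟨j, hj⟩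
        simp only [Set.mem_singleton_iff] at hi hj
        subst hi; subst hj
        have h1 : (inner ℝ u u : ℝ) = 1 := by
          rw [real_inner_self_eq_norm_sq, hnu]; norm_num
        simpa [Set.restrict] using h1
      obtain ⟨ob, hob⟩ := hON.exists_orthonormalBasis_extension_of_card_eq
        (by simp [finrank_euclideanSpace_fin])
      have hobi₀ : ob i₀ = u := hob i₀ rfl
      have hinner : ∀ i j : Fin n, ∑ k, ob i k * ob j k = if i = j then 1 else 0 := by
        intro i j
        have h := ob.orthonormal
        rw [orthonormal_iff_ite] at h
        have h' := h i j
        simpa [PiLp.inner_apply, RCLike.inner_apply, conj_trivial, mul_comm] using h'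
      set W : Matrix (Fin n) (Fin n) ℝ := Matrix.of (fun j i => ob i j) with hW
      have hWO : Wᵀ * W = 1 := by
        ext i j
        simp only [Matrix.mul_apply, Matrix.transpose_apply, hW, Matrix.of_apply,
          Matrix.one_apply]
        exact hinner i j
      have hdet2 : W.det * W.det = 1 := by
        have := congrArg Matrix.det hWO
        rwa [Matrix.det_mul, Matrix.det_transpose, Matrix.det_one] at this
      set ε : ℝ := W.det with hε
      have hε2 : ε * ε = 1 := hdet2
      set s : Fin n → ℝ := fun i => if i = i₀ then ε else 1 with hs
      have hss : ∀ i, s i * s i = 1 := by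
        intro i
        by_cases h : i = i₀ <;> simp [hs, h, hε2]
      set V : Matrix (Fin n) (Fin n) ℝ := W * Matrix.diagonal s with hV
      have hVO : Vᵀ * V = 1 := by
        have h1 : Vᵀ * V = Matrix.diagonal s * (Wᵀ * W) * Matrix.diagonal s := by
          rw [hV, Matrix.transpose_mul, Matrix.diagonal_transpose]
          noncomm_ring
        rw [h1, hWO, Matrix.mul_one, Matrix.diagonal_mul_diagonal]
        rw [show (fun i => s i * s i) = fun _ => (1 : ℝ) from funext hss]
        exact Matrix.diagonal_one
      have hprods : ∏ i, s i = ε := by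
        rw [hs]
        rw [Finset.prod_eq_single i₀ (fun j _ hj => if_neg hj) (by simp)]
        simp
      have hVdet : V.det = 1 := by
        rw [hV, Matrix.det_mul, Matrix.det_diagonal, hprods, ← hε, hε2]
      refine ⟨V, ⟨hVO, hVdet⟩, ?_⟩
      rw [quad_value a M Lam V hdiag, ← hb]
      have hbu : ∀ j, b j = r * u j := by
        intro j; rw [huj j]
        field_simp
      have hc : ∀ i, (Vᵀ.mulVec b) i = s i * r * (if i = i₀ then 1 else 0) := by
        intro i
        have hVt : ∀ j, Vᵀ i j = ob i j * s i := by
          intro j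
          rw [Matrix.transpose_apply, hV, Matrix.mul_diagonal, hW]
          rfl
        calc (Vᵀ.mulVec b) i = ∑ j, Vᵀ i j * b j := rfl
          _ = ∑ j, (ob i j * s i) * (r * u j) := by
              refine Finset.sum_congr rfl fun j _ => ?_
              rw [hVt j, ← hbu j]
          _ = s i * r * ∑ j, ob i j * ob i₀ j := by
              rw [Finset.mul_sum]
              refine Finset.sum_congr rfl fun j _ => ?_
              rw [show u j = ob i₀ j from by rw [hobi₀]]
              ring
          _ = s i * r * (if i = i₀ then 1 else 0) := by rw [hinner i i₀]
      have hsum : ∑ i, Lam i i * ((Vᵀ.mulVec b) i) ^ 2 = Lam i₀ i₀ * r ^ 2 := by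
        rw [Finset.sum_eq_single i₀ (fun j _ hj => ?_) (by simp)]
        · rw [hc i₀, if_pos rfl, mul_one]
          have : (s i₀ * r) ^ 2 = r ^ 2 := by
            have := hss i₀; nlinarith [hss i₀]
          rw [this]
        · rw [hc j, if_neg hj]
          ring
      rw [hsum, henorm, ← hr2, hlam, hi₀]
      ring
  · -- upper bound
    rintro x ⟨V, ⟨hVO, -⟩, rfl⟩
    rw [quad_value a M Lam V hdiag, ← hb]
    calc ∑ i, Lam i i * ((Vᵀ.mulVec b) i) ^ 2
        ≤ ∑ i, lam * ((Vᵀ.mulVec b) i) ^ 2 :=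
          Finset.sum_le_sum fun i _ =>
            mul_le_mul_of_nonneg_right (Finset.le_sup' (fun i : Fin n => Lam i i) (Finset.mem_univ i)) (sq_nonneg _)
      _ = lam * ∑ i, ((Vᵀ.mulVec b) i) ^ 2 := by rw [Finset.mul_sum]
      _ = lam * ∑ i, b i ^ 2 := by rw [norm_preserved V hVO b]
      _ = _root_.enorm b ^ 2 * lam := by rw [henorm]; ring
end
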